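/- Let q > 1, I ∈ ℤ_{≥1}, ν = q^{-I}, ρ ∈ (0,I), and let χ < 0 solve ∑_{i=1}^I χ/(χ - q^i) = ρ. Let π_ρ be the stationary single-site measure and suppose the occupation variables η_z are i.i.d. π_ρ. Suppose K(y-1) ∈ {0,1} is independent of η_y with P(K(y-1)=1) = αχ/(1+αχ) for a parameter α with 1 + αχ > 0 and probabilities in (0,1). Define the updated variable η' = η_y - B with B ∼ Ber(α(1-q^{η_y})/(1+α)) if K(y-1)=0, and η' = η_y + 1 - B' with B' ∼ Ber((α+νq^{η_y})/(1+α)) if K(y-1)=1 (B, B' conditionally independent given η_y). Then η' ∼ π_ρ; that is, for each i ∈ {0,…,I}: (1/(1+αχ))[π_ρ(i)(1+αq^i)/(1+α) + π_ρ(i+1)α(1-q^{i+1})/(1+α)] + (αχ/(1+αχ))[π_ρ(i)(α+νq^i)/(1+α) + π_ρ(i-1)(1-νq^{i-1})/(1+α)] = π_ρ(i). -/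

import Mathlib

/-- The single-site stationary weight
`π_ρ(i) = ((χ;q)_∞/(χν;q)_∞) ((ν;q)_i/(q;q)_i) χ^i`, where for `ν = q^{-I}` the
normalizing ratio equals the finite product `(∏_{k=0}^{I-1} (1 - ν q^k χ))⁻¹`. -/
noncomputable def statPi (q χ : ℝ) (I : ℕ) (i : ℕ) : ℝ :=
  (∏ k ∈ Finset.range I, (1 - q ^ (-(I : ℤ)) * q ^ k * χ))⁻¹ *
    ((∏ k ∈ Finset.range i, (1 - q ^ (-(I : ℤ)) * q ^ k)) /
      (∏ k ∈ Finset.range i, (1 - q * q ^ k))) * χ ^ i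

/-- Key recurrence: `π(i+1)(1-q^{i+1}) = π(i)(1-νq^i)χ`. -/
lemma statPi_rec (q χ : ℝ) (I : ℕ) (hq : 1 < q) (i : ℕ) :
    statPi q χ I (i + 1) * (1 - q * q ^ i)
      = statPi q χ I i * (1 - q ^ (-(I : ℤ)) * q ^ i) * χ := by
  have hq0 : (0:ℝ) < q := lt_trans one_pos hq
  have hf : ∀ k : ℕ, (1 - q * q ^ k) ≠ 0 := by
    intro k
    have hk : (1:ℝ) ≤ q ^ k := one_le_pow₀ hq.le
    nlinarith
  have hb : ∀ n : ℕ, (∏ k ∈ Finset.range n, (1 - q * q ^ k)) ≠ 0 := fun n =>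
    Finset.prod_ne_zero_iff.2 fun k _ => hf k
  simp only [statPi, Finset.prod_range_succ, pow_succ]
  have h1 := hb i
  have h2 := hf i
  generalize q ^ (-(I : ℤ)) = ν
  generalize (∏ k ∈ Finset.range I, (1 - ν * q ^ k * χ))⁻¹ = D
  generalize (∏ k ∈ Finset.range i, (1 - ν * q ^ k)) = a
  generalize hbb : (∏ k ∈ Finset.range i, (1 - q * q ^ k)) = b at *
  generalize hc : 1 - q * q ^ i = c at *
  field_simp

/-- **Single-site stationarity of π_ρ for the SHS6V update** (key identity in the proof of
Theorem B.3 of the paper).  Let `q > 1`, `I ≥ 1`, `ν = q^{-I}`, `ρ ∈ (0, I)`, `χ < 0` the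
solution of `∑_{i=1}^{I} χ/(χ-qⁱ) = ρ`, and let `α` satisfy `1 + αχ > 0` and `1 + α ≠ 0`.
If `K ∼ Ber(αχ/(1+αχ))` is independent of `η ∼ π_ρ` and `η` is updated by removing a
particle with probability `α(1-q^η)/(1+α)` when `K = 0`, and by adding a particle with
probability `1 - (α+νq^η)/(1+α)` when `K = 1`, then the updated variable is again
distributed as `π_ρ`: for each `i ∈ {0,…,I}`,
`(1/(1+αχ))[π_ρ(i)(1+αqⁱ)/(1+α) + π_ρ(i+1)α(1-q^{i+1})/(1+α)]
 + (αχ/(1+αχ))[π_ρ(i)(α+νqⁱ)/(1+α) + π_ρ(i-1)(1-νq^{i-1})/(1+α)] = π_ρ(i)`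
(with the convention `π_ρ(-1) = 0`). -/
theorem statPi_single_site_stationarity (I : ℕ) (hI : 1 ≤ I) (q ρ χ α : ℝ) (hq : 1 < q)
    (hρ0 : 0 < ρ) (hρI : ρ < I) (hχ : χ < 0)
    (hχeq : ∑ i ∈ Finset.Icc 1 I, χ / (χ - q ^ i) = ρ)
    (hαχ : 0 < 1 + α * χ) (hα : 1 + α ≠ 0)
    (hK : α * χ / (1 + α * χ) ∈ Set.Ioo (0 : ℝ) 1) :
    ∀ i : ℕ, i ≤ I →
      (1 / (1 + α * χ)) *
          (statPi q χ I i * (1 + α * q ^ i) / (1 + α)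
            + statPi q χ I (i + 1) * (α * (1 - q ^ (i + 1))) / (1 + α))
        + (α * χ / (1 + α * χ)) *
          (statPi q χ I i * (α + q ^ (-(I : ℤ)) * q ^ i) / (1 + α)
            + (if i = 0 then 0 else
                statPi q χ I (i - 1) * (1 - q ^ (-(I : ℤ)) * q ^ (i - 1)) / (1 + α)))
        = statPi q χ I i := by
  intro i hi
  have hq0 : (0:ℝ) < q := lt_trans one_pos hq
  have hf : ∀ k : ℕ, (1 - q * q ^ k) ≠ 0 := by
    intro k
    have hk : (1:ℝ) ≤ q ^ k := one_le_pow₀ hq.le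
    nlinarith
  have hαχ' : (1 + α * χ) ≠ 0 := ne_of_gt hαχ
  have hχ0 : χ ≠ 0 := ne_of_lt hχ
  have e1 : statPi q χ I (i + 1)
      = statPi q χ I i * (1 - q ^ (-(I : ℤ)) * q ^ i) * χ / (1 - q * q ^ i) := by
    rw [eq_div_iff (hf i)]; exact statPi_rec q χ I hq i
  obtain _ | j := i
  · rw [if_pos rfl, e1]
    have hq1 : (1:ℝ) - q ≠ 0 := by nlinarith
    simp only [pow_zero, pow_one, mul_one]
    generalize q ^ (-(I : ℤ)) = ν at *
    generalize statPi q χ I 0 = P at *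
    field_simp [hq1]
    ring
  · have hjI : j < I := lt_of_lt_of_le (Nat.lt_succ_self j) hi
    have hν : (1 - q ^ (-(I : ℤ)) * q ^ j) ≠ 0 := by
      have : q ^ (-(I : ℤ)) * q ^ j = q ^ ((j : ℤ) - I) := by
        rw [← zpow_natCast q j, ← zpow_add₀ (ne_of_gt hq0)]; ring_nf
      rw [this]
      have : q ^ ((j : ℤ) - I) < 1 := by
        apply zpow_lt_one_of_neg₀ hq
        omega
      linarith
    have e2 : statPi q χ I j
        = statPi q χ I (j + 1) * (1 - q * q ^ j) / ((1 - q ^ (-(I : ℤ)) * q ^ j) * χ) := by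
      rw [eq_div_iff (mul_ne_zero hν hχ0), ← mul_assoc]
      exact (statPi_rec q χ I hq j).symm
    rw [if_neg (Nat.succ_ne_zero j)]
    simp only [Nat.add_sub_cancel]
    rw [e1, e2]
    have h2 := hf j
    have h3 := hf (j + 1)
    rw [pow_succ] at h3 ⊢
    rw [show q ^ (j + 1 + 1) = q ^ j * q * q from by ring]
    generalize q ^ (-(I : ℤ)) = ν at *
    generalize statPi q χ I (j + 1) = P at *
    generalize hQ : q ^ j = Q at *
    generalize hc2 : 1 - q * (Q * q) = c2 at *
    generalize hc3 : 1 - ν * Q = c3 at *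
    field_simp
    subst hc2 hc3
    ring
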